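/- Let F be a proper subfield of a field K of characteristic 0. Let p(x) = Σ_{k=0}^n a_k x^k ∈ K[x] be nonconstant with a_n ≠ 0, and let q(x) = Σ_{j=0}^m b_j x^j ∈ K[x] with b_m ≠ 0, such that the product a_n · b_m lies in F. Then D_F(p ∘ q) ≥ D_F(q). -/

import Mathlib

open Polynomial

/-- The `F`-deficit of a polynomial `p`: `natDegree p` minus the largest index
of a coefficient not lying in `F`. When all coefficients lie in `F`, the set
below is empty, `sSup ∅ = 0`, and the deficit equals `natDegree p`. -/
noncomputable def deficit {K : Type*} [Field K] (F : Subfield K) (p : K[X]) : ℕ :=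
  p.natDegree - sSup {k : ℕ | p.coeff k ∉ F}

lemma pow_coeff_mem_aux {K : Type*} [Field K] (F : Subfield K) (q : K[X]) (s : ℕ)
    (hs : ∀ i, s < i → q.coeff i ∈ F) :
    ∀ k j, k * q.natDegree + s < j + q.natDegree → (q ^ k).coeff j ∈ F := by
  intro k
  induction k with
  | zero =>
    intro j _
    simp only [pow_zero, coeff_one]
    split_ifs
    · exact F.one_mem
    · exact F.zero_mem
  | succ k ih =>
    intro j hj
    rw [pow_succ', coeff_mul]
    apply Subfield.sum_mem
    rintro ⟨i1, i2⟩ hx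
    rw [Finset.HasAntidiagonal.mem_antidiagonal] at hx
    simp only
    have hmul : (k + 1) * q.natDegree = k * q.natDegree + q.natDegree := by ring
    by_cases h2 : k * q.natDegree < i2
    · have : (q ^ k).coeff i2 = 0 :=
        coeff_eq_zero_of_natDegree_lt (lt_of_le_of_lt (natDegree_pow_le) h2)
      rw [this, mul_zero]; exact F.zero_mem
    · push_neg at h2
      by_cases h1 : q.natDegree < i1
      · rw [coeff_eq_zero_of_natDegree_lt h1, zero_mul]; exact F.zero_mem
      · push_neg at h1
        have hb : q.coeff i1 ∈ F := hs i1 (by omega)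
        have hk : (q ^ k).coeff i2 ∈ F := ih i2 (by omega)
        exact F.mul_mem hb hk

theorem stmt3 {K : Type*} [Field K] [CharZero K] (F : Subfield K) (hF : F ≠ ⊤)
    (p q : K[X]) (hp : 0 < p.natDegree) (hq : q ≠ 0)
    (hprod : p.leadingCoeff * q.leadingCoeff ∈ F) :
    deficit F q ≤ deficit F (p.comp q) := by
  have hbdd : BddAbove {k : ℕ | q.coeff k ∉ F} := by
    refine ⟨q.natDegree, fun k hk => ?_⟩
    by_contra h
    push_neg at h
    exact hk (by rw [coeff_eq_zero_of_natDegree_lt h]; exact F.zero_mem)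
  set s := sSup {k : ℕ | q.coeff k ∉ F} with hsdef
  by_cases hb : q.leadingCoeff ∈ F
  · -- leading coefficient of q lies in F
    have hbne : q.leadingCoeff ≠ 0 := leadingCoeff_ne_zero.2 hq
    have ha : p.leadingCoeff ∈ F := by
      have heq : p.leadingCoeff = (p.leadingCoeff * q.leadingCoeff) * q.leadingCoeff⁻¹ := by
        field_simp
      rw [heq]
      exact F.mul_mem hprod (F.inv_mem hb)
    have hs : ∀ i, s < i → q.coeff i ∈ F := by
      intro i hi
      by_contra h
      exact absurd (le_csSup hbdd h) (not_le.2 hi)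
    have hnm : p.natDegree * q.natDegree = (p.natDegree - 1) * q.natDegree + q.natDegree := by
      cases' hnp : p.natDegree with n
      · omega
      · simp [Nat.succ_sub_one, Nat.succ_mul]
    have key : ∀ j, (p.natDegree - 1) * q.natDegree + s < j → (p.comp q).coeff j ∈ F := by
      intro j hj
      have hcomp : p.comp q =
          ∑ i ∈ Finset.range (p.natDegree + 1), C (p.coeff i) * q ^ i := by
        rw [comp, eval₂_eq_sum_range]
      rw [hcomp, finset_sum_coeff]
      apply Subfield.sum_mem
      intro i hi
      rw [Finset.mem_range] at hi
      rw [coeff_C_mul]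
      rcases eq_or_lt_of_le (Nat.lt_succ_iff.1 hi) with heq | hlt
      · have hc : p.coeff i ∈ F := by rw [heq]; exact ha
        have hpow : (q ^ i).coeff j ∈ F := by
          apply pow_coeff_mem_aux F q s hs
          have : i * q.natDegree = p.natDegree * q.natDegree := by rw [heq]
          omega
        exact F.mul_mem hc hpow
      · have him : i * q.natDegree ≤ (p.natDegree - 1) * q.natDegree :=
          Nat.mul_le_mul_right _ (by omega)
        have hd : (q ^ i).natDegree ≤ i * q.natDegree := natDegree_pow_le
        have : (q ^ i).coeff j = 0 :=
          coeff_eq_zero_of_natDegree_lt (by omega)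
        rw [this, mul_zero]
        exact F.zero_mem
    have hS : sSup {k : ℕ | (p.comp q).coeff k ∉ F} ≤ (p.natDegree - 1) * q.natDegree + s := by
      apply csSup_le'
      intro k hk
      by_contra h
      exact hk (key k (not_le.1 h))
    have hdeg : (p.comp q).natDegree = p.natDegree * q.natDegree := natDegree_comp
    unfold deficit
    rw [hdeg]
    omega
  · -- leading coefficient of q not in F: deficit q = 0
    have hmem : q.natDegree ∈ {k : ℕ | q.coeff k ∉ F} := hb
    have hms : q.natDegree ≤ s := le_csSup hbdd hmem
    have h0 : deficit F q = 0 := by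
      unfold deficit
      omega
    rw [h0]
    exact Nat.zero_le _
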